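/- arXiv:1503.07251 — 4 statements merged into one kernel-verified Lean document; each statement's English description precedes it below -/
import Mathlib

section
/- Let F be a free abelian group and let p_1, ..., p_l be finitely many nonzero elements of the integral group ring ℤ[F]. Then there exists a prime number q and a group homomorphism α : F → ℤ/qℤ such that for every j ∈ {1, ..., q−1}, the ring homomorphism ℤ[F] → ℂ induced by the character g ↦ exp(2πi·j·α(g)/q) sends each of p_1, ..., p_l to a nonzero complex number. -/
open Finsupp in
theorem exists_pairing_ne_zero {ι : Type*} (D : Finset (ι →₀ ℤ)) (hD : ∀ d ∈ D, d ≠ 0) :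
    ∃ c : ι → ℤ, ∀ d ∈ D, d.sum (fun i a => a * c i) ≠ 0 := by
  classical
  induction D using Finset.induction_on with
  | empty => exact ⟨0, by simp⟩
  | @insert a D ha IH =>
    obtain ⟨c, hc⟩ := IH (fun d hd => hD d (Finset.mem_insert_of_mem hd))
    have ha0 : a ≠ 0 := hD a (Finset.mem_insert_self a D)
    obtain ⟨i0, hi0⟩ : ∃ i0, a i0 ≠ 0 := by
      by_contra h
      push_neg at h
      exact ha0 (Finsupp.ext h)
    set N : ℕ := ((insert a D).sup fun d => (d i0).natAbs) + 1 with hN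
    refine ⟨fun i => (N : ℤ) * c i + (if i = i0 then 1 else 0), ?_⟩
    have key : ∀ d : ι →₀ ℤ, (d.sum fun i x => x * ((N : ℤ) * c i + (if i = i0 then 1 else 0)))
        = (N : ℤ) * (d.sum fun i x => x * c i) + d i0 := by
      intro d
      have h1 : (d.sum fun i x => x * ((N : ℤ) * c i + (if i = i0 then 1 else 0)))
          = (d.sum fun i x => (N : ℤ) * (x * c i)) + (d.sum fun i x => if i = i0 then x else 0) := by
        rw [← Finsupp.sum_add]
        apply Finsupp.sum_congr
        intro i _
        by_cases h : i = i0 <;> simp [h] <;> ring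
      rw [h1, ← Finsupp.mul_sum]
      congr 1
      rw [Finsupp.sum_ite_eq' d i0 (fun _ x => x)]
      by_cases h : i0 ∈ d.support
      · simp [h]
      · simp [h, Finsupp.notMem_support_iff.mp h]
    intro d hd
    rw [key d]
    have hsup : (d i0).natAbs ≤ N - 1 := by
      rw [hN]; simpa using Finset.le_sup (f := fun d => (d i0).natAbs) hd
    rcases Finset.mem_insert.mp hd with rfl | hdD
    · by_cases hs : (d.sum fun i x => x * c i) = 0
      · rw [hs]; simpa using hi0
      · have h3 : N ≤ ((N : ℤ) * (d.sum fun i x => x * c i)).natAbs := by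
          rw [Int.natAbs_mul]
          simp only [Int.natAbs_natCast]
          exact Nat.le_mul_of_pos_right _ (by omega)
        omega
    · have hs := hc d hdD
      have h3 : N ≤ ((N : ℤ) * (d.sum fun i x => x * c i)).natAbs := by
        rw [Int.natAbs_mul]
        simp only [Int.natAbs_natCast]
        exact Nat.le_mul_of_pos_right _ (by omega)
      omega


theorem aeval_ne_zero_of_natDegree_lt (q : ℕ) (hq : q.Prime) (ω : ℂ)
    (hω : IsPrimitiveRoot ω q) (P : Polynomial ℤ) (hP : P ≠ 0)
    (hdeg : P.natDegree < q - 1) : Polynomial.aeval ω P ≠ 0 := by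
  intro h0
  have hmin : minpoly ℚ ω = Polynomial.cyclotomic q ℚ :=
    (Polynomial.cyclotomic_eq_minpoly_rat hω hq.pos).symm
  have hdvd : minpoly ℚ ω ∣ P.map (algebraMap ℤ ℚ) := by
    apply minpoly.dvd
    rwa [Polynomial.aeval_map_algebraMap]
  have hmap0 : P.map (algebraMap ℤ ℚ) ≠ 0 := by
    rwa [Ne, Polynomial.map_eq_zero_iff (by exact_mod_cast Int.cast_injective)]
  have hle := Polynomial.natDegree_le_of_dvd hdvd hmap0
  rw [hmin, Polynomial.natDegree_cyclotomic, Nat.totient_prime hq,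
    Polynomial.natDegree_map_eq_of_injective (by exact_mod_cast Int.cast_injective)] at hle
  omega

/-- Let `F` be a free abelian group and `p 1, …, p l` finitely many nonzero
elements of the integral group ring `ℤ[F]` (the monoid algebra `AddMonoidAlgebra ℤ F`).
Then there exists a prime `q` and a group homomorphism `α : F → ℤ/qℤ` such that for every
`j ∈ {1, …, q-1}`, the ring homomorphism `ℤ[F] → ℂ` induced by the character
`g ↦ exp(2πi·j·α(g)/q)` (i.e. `Σ a_g·g ↦ Σ a_g·exp(2πi·j·α(g)/q)`) sends each `p i`
to a nonzero complex number. -/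
theorem stmt0 (F : Type*) [AddCommGroup F] [Module.Free ℤ F]
    (l : ℕ) (p : Fin l → AddMonoidAlgebra ℤ F) (hp : ∀ i, p i ≠ 0) :
    ∃ q : ℕ, q.Prime ∧ ∃ α : F →+ ZMod q,
      ∀ j ∈ Finset.Icc 1 (q - 1), ∀ i : Fin l,
        Finsupp.sum (p i).coeff (fun g a =>
          (a : ℂ) * Complex.exp (2 * Real.pi * Complex.I * (j : ℂ) * ((α g).val : ℂ) / (q : ℂ)))
          ≠ 0 := by
  classical
  set b := Module.Free.chooseBasis ℤ F with hb
  set S : Finset F := Finset.univ.biUnion (fun i : Fin l => (p i).coeff.support) with hS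
  set D : Finset (Module.Free.ChooseBasisIndex ℤ F →₀ ℤ) :=
    ((S ×ˢ S).filter fun x => x.1 ≠ x.2).image (fun x => b.repr x.1 - b.repr x.2) with hD
  have hDne : ∀ d ∈ D, d ≠ 0 := by
    intro d hd
    simp only [hD, Finset.mem_image, Finset.mem_filter] at hd
    obtain ⟨⟨g, h⟩, ⟨_, hne⟩, rfl⟩ := hd
    intro h0
    exact hne (b.repr.injective (sub_eq_zero.mp h0))
  obtain ⟨c, hc⟩ := exists_pairing_ne_zero D hDne
  set β : F → ℤ := fun g => (b.repr g).sum fun i a => a * c i with hβ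
  have hβadd : ∀ x y : F, β (x + y) = β x + β y := by
    intro x y
    simp only [hβ, map_add]
    exact Finsupp.sum_add_index' (by simp) (by intros; ring)
  have hβinj : ∀ g ∈ S, ∀ h ∈ S, g ≠ h → β g ≠ β h := by
    intro g hg h hh hne heq
    have hd : b.repr g - b.repr h ∈ D :=
      Finset.mem_image.mpr ⟨(g, h),
        Finset.mem_filter.mpr ⟨Finset.mem_product.mpr ⟨hg, hh⟩, hne⟩, rfl⟩
    apply hc _ hd
    rw [Finsupp.sum_sub_index (fun a b₁ b₂ => by ring)]
    rw [show ((b.repr g).sum fun i a => a * c i) = β g from rfl,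
      show ((b.repr h).sum fun i a => a * c i) = β h from rfl, heq, sub_self]
  set M : ℕ := S.sup fun g => (β g).natAbs with hM
  have hMb : ∀ g ∈ S, (β g).natAbs ≤ M := by
    intro g hg; rw [hM]; exact Finset.le_sup (f := fun g => (β g).natAbs) hg
  obtain ⟨q, hqge, hq⟩ := Nat.exists_infinite_primes (2 * M + 2)
  haveI : NeZero q := ⟨hq.ne_zero⟩
  refine ⟨q, hq, AddMonoidHom.mk' (fun g => ((β g : ℤ) : ZMod q)) (by
    intro x y
    show (((β (x + y)) : ℤ) : ZMod q) = ((β x : ℤ) : ZMod q) + ((β y : ℤ) : ZMod q)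
    rw [hβadd]; push_cast; ring), ?_⟩
  intro j hj i
  rw [Finset.mem_Icc] at hj
  simp only [AddMonoidHom.mk'_apply]
  have hq0 : (q : ℕ) ≠ 0 := hq.ne_zero
  have hζ := Complex.isPrimitiveRoot_exp q hq0
  have hcop : Nat.Coprime j q :=
    Nat.Coprime.symm ((Nat.Prime.coprime_iff_not_dvd hq).mpr
      (Nat.not_dvd_of_pos_of_lt (by omega) (by omega)))
  set ζ := Complex.exp (2 * Real.pi * Complex.I / q) with hζdef
  have hω : IsPrimitiveRoot (ζ ^ j) q := ((hζ.pow_iff_coprime hq.pos) j).mpr hcop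
  set ω := ζ ^ j with hωdef
  have hωne : ω ≠ 0 := hω.ne_zero hq0
  have hzpow : ∀ n : ℤ, ω ^ n = Complex.exp (2 * Real.pi * Complex.I * j * n / q) := by
    intro n
    have h1 : ω ^ n = ζ ^ ((j : ℤ) * n) := by
      rw [hωdef, ← zpow_natCast ζ j, ← zpow_mul]
    rw [h1, ← Complex.exp_int_mul]
    congr 1
    push_cast
    ring
  have hval : ∀ g : F, ω ^ ((((β g : ℤ) : ZMod q)).val : ℤ) = ω ^ (β g) := by
    intro g
    set v : ℕ := (((β g : ℤ) : ZMod q)).val with hv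
    have h1 : ((v : ℤ) : ZMod q) = ((β g : ℤ) : ZMod q) := by
      rw [hv]
      push_cast [ZMod.natCast_val, ZMod.cast_id]
      rfl
    have h2 : (v : ℤ) ≡ β g [ZMOD (q : ℤ)] :=
      (ZMod.intCast_eq_intCast_iff _ _ _).mp h1
    obtain ⟨k, hk⟩ := Int.modEq_iff_dvd.mp h2
    have h3 : (β g : ℤ) = (v : ℤ) + (q : ℤ) * k := by linarith
    have hq1 : ω ^ ((q : ℕ) : ℤ) = 1 := by rw [zpow_natCast]; exact hω.pow_eq_one
    rw [h3, zpow_add₀ hωne, zpow_mul, hq1, one_zpow, mul_one]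
  have hsum : (Finsupp.sum (p i).coeff fun g a =>
      (a : ℂ) * Complex.exp (2 * Real.pi * Complex.I * (j : ℂ) *
        (((((β g : ℤ) : ZMod q)).val : ℕ) : ℂ) / (q : ℂ)))
      = Finsupp.sum (p i).coeff fun g a => (a : ℂ) * ω ^ (β g) := by
    apply Finsupp.sum_congr
    intro g _
    congr 1
    rw [← hval g, hzpow]
    norm_cast
  intro h0
  rw [hsum] at h0
  -- the polynomial
  set P : Polynomial ℤ :=
    Finsupp.sum (p i).coeff (fun g a => Polynomial.C a * Polynomial.X ^ (β g + M).toNat) with hP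
  have hsupS : ∀ g ∈ (p i).coeff.support, g ∈ S := by
    intro g hg
    exact Finset.mem_biUnion.mpr ⟨i, Finset.mem_univ i, hg⟩
  obtain ⟨g0, hg0⟩ := Finsupp.support_nonempty_iff.mpr (mt AddMonoidAlgebra.coeff_eq_zero.mp (hp i))
  have hPne : P ≠ 0 := by
    intro hP0
    have hcoeff : P.coeff ((β g0 + M).toNat) = (p i).coeff g0 := by
      rw [hP, Finsupp.sum, Polynomial.finset_sum_coeff]
      rw [Finset.sum_eq_single g0]
      · simp [Polynomial.coeff_C_mul, Polynomial.coeff_X_pow]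
      · intro g hg hne
        have hb1 := hMb g (hsupS g hg)
        have hb2 := hMb g0 (hsupS g0 hg0)
        have hne' : β g ≠ β g0 := hβinj g (hsupS g hg) g0 (hsupS g0 hg0) hne
        have hexp : (β g + M).toNat ≠ (β g0 + M).toNat := by omega
        simp only [Polynomial.coeff_C_mul, Polynomial.coeff_X_pow]
        rw [if_neg (Ne.symm hexp), mul_zero]
      · intro h; exact absurd hg0 h
    rw [hP0] at hcoeff
    simp only [Polynomial.coeff_zero] at hcoeff
    exact (Finsupp.mem_support_iff.mp hg0) hcoeff.symm
  have hPdeg : P.natDegree ≤ 2 * M := by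
    rw [hP, Finsupp.sum]
    apply Polynomial.natDegree_sum_le_of_forall_le
    intro g hg
    refine le_trans (Polynomial.natDegree_mul_le) ?_
    have hb1 := hMb g (hsupS g hg)
    simp only [Polynomial.natDegree_C, Polynomial.natDegree_X_pow, zero_add]
    omega
  have haeval : Polynomial.aeval ω P = ω ^ (M : ℤ) * Finsupp.sum (p i).coeff (fun g a => (a : ℂ) * ω ^ (β g)) := by
    rw [hP, Finsupp.sum, Finsupp.sum, map_sum, Finset.mul_sum]
    apply Finset.sum_congr rfl
    intro g hg
    rw [map_mul, Polynomial.aeval_C, map_pow, Polynomial.aeval_X]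
    have hb1 := hMb g (hsupS g hg)
    have h1 : ((β g + M).toNat : ℤ) = β g + M := Int.toNat_of_nonneg (by omega)
    have h2 : (ω ^ ((β g + M).toNat) : ℂ) = ω ^ ((β g + (M : ℤ)) : ℤ) := by
      rw [← zpow_natCast, h1]
    rw [h2, zpow_add₀ hωne]
    simp only [algebraMap_int_eq, eq_intCast]
    ring
  have := aeval_ne_zero_of_natDegree_lt q hq ω hω P hPne (by omega)
  apply this
  rw [haeval, h0, mul_zero]
end

section
/- Let F be a free abelian group and let p_1, ..., p_l be finitely many nonzero elements of the integral group ring ℤ[F]. Then there exists a group homomorphism Ψ : F → ℤ such that the induced ring homomorphism ℤ[F] → ℤ[ℤ] = ℤ[s^{±1}] (sending Σ a_g·g to Σ a_g·s^{Ψ(g)}) maps each of p_1, ..., p_l to a nonzero Laurent polynomial. -/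
/-- A free abelian group admits, for any finite set of nonzero elements, a homomorphism
to `ℤ` that is nonzero on all of them. -/
theorem exists_addHom_ne_zero (F : Type*) [AddCommGroup F] [Module.Free ℤ F]
    (D : Finset F) (hD : ∀ d ∈ D, d ≠ 0) :
    ∃ Ψ : F →+ ℤ, ∀ d ∈ D, Ψ d ≠ 0 := by
  classical
  revert hD
  induction D using Finset.induction with
  | empty => exact fun _ => ⟨0, by simp⟩
  | @insert a s ha ih =>
    intro hD'
    obtain ⟨Ψ, hΨ⟩ := ih (fun d hd => hD' d (Finset.mem_insert_of_mem hd))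
    have ha0 : a ≠ 0 := hD' a (Finset.mem_insert_self a s)
    -- a functional nonzero on `a`
    set b := Module.Free.chooseBasis ℤ F with hb
    have hrepr : b.repr a ≠ 0 := by
      intro h
      exact ha0 (by simpa using congrArg b.repr.symm h)
    obtain ⟨i, hi⟩ := Finsupp.ne_iff.mp hrepr
    simp only [Finsupp.coe_zero, Pi.zero_apply] at hi
    set φ : F →+ ℤ := (b.coord i).toAddMonoidHom with hφ
    have hφa : φ a ≠ 0 := hi
    set N : ℤ := 1 + (insert a s).sup (fun e => (Ψ e).natAbs) with hN
    refine ⟨Ψ + N • φ, ?_⟩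
    intro d hd
    have hNbig : |Ψ d| < N := by
      have : (Ψ d).natAbs ≤ (insert a s).sup (fun e => (Ψ e).natAbs) :=
        Finset.le_sup (f := fun e => (Ψ e).natAbs) hd
      have := Int.ofNat_le.mpr this
      simp only [Int.abs_eq_natAbs]
      omega
    simp only [AddMonoidHom.add_apply, AddMonoidHom.smul_apply, smul_eq_mul]
    by_cases hφd : φ d = 0
    · have hd' : d ∈ s := by
        rcases Finset.mem_insert.mp hd with rfl | h
        · exact absurd hφd hφa
        · exact h
      simpa [hφd] using hΨ d hd'
    · intro h
      have h1 : (1 : ℤ) ≤ |φ d| := Int.one_le_abs hφd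
      have h2 : N ≤ N * |φ d| := by
        nlinarith [abs_nonneg (Ψ d)]
      have h3 : |N * φ d| = N * |φ d| := by
        rw [abs_mul, abs_of_nonneg]; omega
      have : Ψ d = -(N * φ d) := by linarith [h]
      have := congrArg abs this
      rw [abs_neg, h3] at this
      omega

/-- Let `F` be a free abelian group and `p 1, …, p l` finitely many nonzero
elements of the integral group ring `ℤ[F]` (the monoid algebra `AddMonoidAlgebra ℤ F`).
Then there exists a group homomorphism `Ψ : F → ℤ` such that the induced ring homomorphism
`ℤ[F] → ℤ[ℤ] = ℤ[s^{±1}]` (sending `Σ a_g·g` to `Σ a_g·s^{Ψ(g)}`) maps each `p i` to a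
nonzero Laurent polynomial. -/
theorem stmt1 (F : Type*) [AddCommGroup F] [Module.Free ℤ F]
    (l : ℕ) (p : Fin l → AddMonoidAlgebra ℤ F) (hp : ∀ i, p i ≠ 0) :
    ∃ Ψ : F →+ ℤ, ∀ i : Fin l,
      AddMonoidAlgebra.mapDomainRingHom ℤ Ψ (p i) ≠ (0 : LaurentPolynomial ℤ) := by
  classical
  have husF : UniqueSums F :=
    UniqueSums.of_injective_addHom _ (Module.Free.chooseBasis ℤ F).repr.injective inferInstance
  have : NoZeroDivisors (AddMonoidAlgebra ℤ F) := inferInstance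
  -- the product of the p i is nonzero
  set q : AddMonoidAlgebra ℤ F := ∏ i, p i with hq
  have hq0 : q ≠ 0 := Finset.prod_ne_zero_iff.mpr fun i _ => hp i
  set T : Finset F := q.coeff.support with hT
  set D : Finset F := ((T ×ˢ T).filter (fun x => x.1 ≠ x.2)).image (fun x => x.1 - x.2) with hD
  have hDne : ∀ d ∈ D, d ≠ 0 := by
    intro d hd
    simp only [hD, Finset.mem_image, Finset.mem_filter] at hd
    obtain ⟨⟨g, h⟩, ⟨_, hgh⟩, rfl⟩ := hd
    exact sub_ne_zero.mpr hgh
  obtain ⟨Ψ, hΨ⟩ := exists_addHom_ne_zero F D hDne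
  have hinj : Set.InjOn Ψ ↑T := by
    intro g hg h hh hgh'
    by_contra hne
    have hmem : g - h ∈ D := by
      simp only [hD, Finset.mem_image, Finset.mem_filter, Finset.mem_product]
      exact ⟨(g, h), ⟨⟨hg, hh⟩, hne⟩, rfl⟩
    exact hΨ _ hmem (by rw [map_sub, hgh', sub_self])
  -- image of q is nonzero
  have hmapq : AddMonoidAlgebra.mapDomainRingHom ℤ Ψ q ≠ 0 := by
    obtain ⟨g, hg⟩ := Finsupp.support_nonempty_iff.mpr (mt AddMonoidAlgebra.coeff_eq_zero.mp hq0)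
    intro h0
    have := Finsupp.mapDomain_apply' (↑T) q.coeff (by simp [hT]) hinj hg
    rw [show Finsupp.mapDomain (Ψ : F → ℤ) q.coeff
        = (AddMonoidAlgebra.mapDomainRingHom ℤ Ψ q).coeff from rfl, h0] at this
    simp only [AddMonoidAlgebra.coeff_zero, Finsupp.coe_zero, Pi.zero_apply] at this
    exact (Finsupp.mem_support_iff.mp hg) this.symm
  refine ⟨Ψ, fun i h0 => hmapq ?_⟩
  rw [hq, map_prod]
  exact Finset.prod_eq_zero (Finset.mem_univ i) h0
end

section
/- Let p be a prime number and let g be a nontrivial element of the cyclic group ℤ/pℤ. Then the ℂ-linear endomorphism of the augmentation ideal I(ℂ) of the group algebra ℂ[ℤ/pℤ] given by v ↦ v − v·g (where v·g denotes the right action of g by multiplication in the group algebra) is invertible, i.e. a linear isomorphism. -/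
/-- The augmentation homomorphism `R[G] → R`, `Σ a_g·g ↦ Σ a_g`. -/
noncomputable def augmentation (R : Type*) (G : Type*) [CommRing R] [Group G] :
    MonoidAlgebra R G →ₐ[R] R :=
  MonoidAlgebra.lift R R G 1

/-- The augmentation ideal `I(R)` of the group algebra `R[G]`, the kernel of the
augmentation `Σ a_g·g ↦ Σ a_g`. -/
noncomputable def augmentationIdeal (R : Type*) (G : Type*) [CommRing R] [Group G] :
    Ideal (MonoidAlgebra R G) :=
  RingHom.ker (augmentation R G).toRingHom

theorem aug_apply (G : Type*) [Group G] (v : MonoidAlgebra ℂ G) :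
    augmentation ℂ G v = v.coeff.sum fun _ b => b := by
  rw [augmentation, MonoidAlgebra.lift_apply]
  simp

/-- Let `p` be a prime and `g` a nontrivial element of `ℤ/pℤ`. Then the
`ℂ`-linear endomorphism of the augmentation ideal `I(ℂ)` of `ℂ[ℤ/pℤ]` given by
`v ↦ v - v·g` is invertible, i.e. a linear isomorphism: there is a `ℂ`-linear
automorphism of `I(ℂ)` whose underlying map is `v ↦ v - v·g`. -/
theorem stmt4 (p : ℕ) (hp : p.Prime) (g : ZMod p) (hg : g ≠ 0) :
    ∃ e : augmentationIdeal ℂ (Multiplicative (ZMod p)) ≃ₗ[ℂ]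
          augmentationIdeal ℂ (Multiplicative (ZMod p)),
      ∀ v : augmentationIdeal ℂ (Multiplicative (ZMod p)),
        (e v : MonoidAlgebra ℂ (Multiplicative (ZMod p)))
          = (v : MonoidAlgebra ℂ (Multiplicative (ZMod p)))
            - (v : MonoidAlgebra ℂ (Multiplicative (ZMod p)))
              * MonoidAlgebra.single (Multiplicative.ofAdd g) 1 := by
  haveI := Fact.mk hp
  haveI : NeZero p := ⟨hp.ne_zero⟩
  set G := Multiplicative (ZMod p)
  set σ : MonoidAlgebra ℂ G := MonoidAlgebra.single (Multiplicative.ofAdd g) 1 with hσ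
  have haugσ : augmentation ℂ G σ = 1 := by
    rw [hσ, augmentation]
    simp
  have hmem : ∀ v : augmentationIdeal ℂ G,
      (v : MonoidAlgebra ℂ G) - v * σ ∈ augmentationIdeal ℂ G := by
    intro v
    have hv := v.2
    simp only [augmentationIdeal, RingHom.mem_ker] at hv ⊢
    simp only [map_sub, map_mul]
    change augmentation ℂ G _ - augmentation ℂ G _ * augmentation ℂ G σ = 0
    rw [haugσ, show augmentation ℂ G ↑v = 0 from hv]; ring
  set f : augmentationIdeal ℂ G →ₗ[ℂ] augmentationIdeal ℂ G :=
    { toFun := fun v => ⟨(v : MonoidAlgebra ℂ G) - v * σ, hmem v⟩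
      map_add' := by intro a b; apply Subtype.ext; push_cast; ring
      map_smul' := by
        intro c a; apply Subtype.ext
        simp [smul_sub, smul_mul_assoc]
      } with hf
  haveI : FiniteDimensional ℂ (MonoidAlgebra ℂ G) := by
    exact Module.Finite.equiv (MonoidAlgebra.coeffLinearEquiv ℂ).symm
  have hinj : Function.Injective f := by
    intro v w hvw
    have h : (v : MonoidAlgebra ℂ G) - v * σ = (w : MonoidAlgebra ℂ G) - w * σ :=
      congrArg Subtype.val hvw
    suffices key : ∀ u : augmentationIdeal ℂ G,
        (u : MonoidAlgebra ℂ G) = (u : MonoidAlgebra ℂ G) * σ → u = 0 by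
      have := key (v - w) ?_
      · exact sub_eq_zero.mp this
      · push_cast; linear_combination h
    intro u hu
    set U : MonoidAlgebra ℂ G := (u : MonoidAlgebra ℂ G) with hU
    have hstep : ∀ x : G, U.coeff x = U.coeff (x * (Multiplicative.ofAdd g)⁻¹) := by
      intro x
      conv_lhs => rw [hu]
      rw [hσ, MonoidAlgebra.coeff_mul_single_apply, mul_one]
    have hiter : ∀ n : ℕ, ∀ x : G, U.coeff x = U.coeff (x * ((Multiplicative.ofAdd g)⁻¹) ^ n) := by
      intro n
      induction n with
      | zero => simp
      | succ n ih =>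
        intro x
        rw [hstep x, ih (x * (Multiplicative.ofAdd g)⁻¹), pow_succ', ← mul_assoc]
    have hconst : ∀ x : G, U.coeff x = U.coeff 1 := by
      intro x
      set a : ZMod p := Multiplicative.toAdd x with ha
      set n : ℕ := (a * (-g)⁻¹).val with hn
      have hng : ((Multiplicative.ofAdd g)⁻¹ : G) ^ n = x := by
        have h1 : ((n : ZMod p)) * (-g) = a := by
          rw [hn]
          rw [ZMod.natCast_val, ZMod.cast_id]
          field_simp
        apply Multiplicative.toAdd.injective
        rw [toAdd_pow, toAdd_inv, toAdd_ofAdd]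
        rw [nsmul_eq_mul, h1, ← ha]
      rw [hiter n 1, one_mul, hng]
    have hone : U.coeff 1 = 0 := by
      have hker := u.2
      simp only [augmentationIdeal, RingHom.mem_ker] at hker
      have haug : augmentation ℂ G U = 0 := hker
      rw [aug_apply, Finsupp.sum_fintype _ _ (fun _ => rfl)] at haug
      have : ∑ x : G, U.coeff x = (Fintype.card G : ℂ) * U.coeff 1 := by
        rw [Finset.sum_congr rfl fun x _ => hconst x]
        simp [Finset.sum_const, nsmul_eq_mul]
      rw [this] at haug
      have hcard : (Fintype.card G : ℂ) ≠ 0 := by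
        have : Fintype.card G = p := by
          rw [show Fintype.card G = Fintype.card (ZMod p) from Fintype.card_congr (Equiv.refl _)]
          exact ZMod.card p
        rw [this]
        exact_mod_cast hp.ne_zero
      exact (mul_eq_zero.mp haug).resolve_left hcard
    apply Subtype.ext
    apply MonoidAlgebra.ext
    apply Finsupp.ext
    intro x
    rw [show (0 : augmentationIdeal ℂ G).1 = 0 from rfl]
    rw [show ((u : MonoidAlgebra ℂ G)).coeff x = U.coeff x from rfl, hconst x, hone]
    rfl
  refine ⟨LinearEquiv.ofInjectiveEndo f hinj, fun v => ?_⟩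
  rw [LinearEquiv.coe_ofInjectiveEndo]
  rfl
end

section
/- Let p and q be two distinct prime numbers with q > 2, and let 𝔽_q be the field with q elements. For every nontrivial element g of the cyclic group ℤ/pℤ, the 𝔽_q-linear endomorphism of the augmentation ideal I(𝔽_q) of the group algebra 𝔽_q[ℤ/pℤ] given by v ↦ v − v·g is invertible, i.e. a linear isomorphism. -/
lemma augmentation_apply' (R : Type*) (G : Type*) [CommRing R] [Group G]
    (v : MonoidAlgebra R G) : augmentation R G v = v.coeff.sum fun _ b => b := by
  simp [augmentation, MonoidAlgebra.lift_apply]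

lemma augmentation_single (R : Type*) (G : Type*) [CommRing R] [Group G] (a : G) :
    augmentation R G (MonoidAlgebra.single a 1) = 1 := by
  rw [augmentation_apply', MonoidAlgebra.coeff_single, Finsupp.sum_single_index rfl]

/-- Let `p` and `q` be distinct primes with `q > 2`, and `𝔽_q = ZMod q` the
field with `q` elements. For every nontrivial element `g` of `ℤ/pℤ`, the `𝔽_q`-linear
endomorphism of the augmentation ideal `I(𝔽_q)` of `𝔽_q[ℤ/pℤ]` given by `v ↦ v - v·g`
is invertible, i.e. a linear isomorphism: there is an `𝔽_q`-linear automorphism of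
`I(𝔽_q)` whose underlying map is `v ↦ v - v·g`. -/
theorem stmt5 (p q : ℕ) (hp : p.Prime) (hq : q.Prime) (hpq : p ≠ q) (hq2 : 2 < q)
    (g : ZMod p) (hg : g ≠ 0) :
    ∃ e : augmentationIdeal (ZMod q) (Multiplicative (ZMod p)) ≃ₗ[ZMod q]
          augmentationIdeal (ZMod q) (Multiplicative (ZMod p)),
      ∀ v : augmentationIdeal (ZMod q) (Multiplicative (ZMod p)),
        (e v : MonoidAlgebra (ZMod q) (Multiplicative (ZMod p)))
          = (v : MonoidAlgebra (ZMod q) (Multiplicative (ZMod p)))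
            - (v : MonoidAlgebra (ZMod q) (Multiplicative (ZMod p)))
              * MonoidAlgebra.single (Multiplicative.ofAdd g) 1 := by
  haveI : Fact p.Prime := ⟨hp⟩
  haveI : Fact q.Prime := ⟨hq⟩
  set R := ZMod q with hR
  set G := Multiplicative (ZMod p) with hG
  set s : MonoidAlgebra R G := MonoidAlgebra.single (Multiplicative.ofAdd g) 1 with hs
  set I := augmentationIdeal R G with hI
  have hmem : ∀ v : I, ((v : MonoidAlgebra R G) - v * s) ∈ I := by
    intro v
    have hv : augmentation R G (v : MonoidAlgebra R G) = 0 := v.2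
    show ((v : MonoidAlgebra R G) - v * s) ∈ RingHom.ker (augmentation R G).toRingHom
    rw [RingHom.mem_ker]
    simp only [AlgHom.toRingHom_eq_coe, RingHom.coe_coe, map_sub, map_mul, hv, hs,
      augmentation_single, zero_mul, sub_zero]
  let f : I →ₗ[R] I :=
    { toFun := fun v => ⟨(v : MonoidAlgebra R G) - v * s, hmem v⟩
      map_add' := by
        intro a b
        apply Subtype.ext
        push_cast
        ring
      map_smul' := by
        intro c v
        apply Subtype.ext
        simp [smul_sub, smul_mul_assoc] }
  have hinj : Function.Injective f := by
    rw [injective_iff_map_eq_zero]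
    intro v hv0
    have h0 : (v : MonoidAlgebra R G) - v * s = 0 := congrArg Subtype.val hv0
    have heq : (v : MonoidAlgebra R G) = v * s := by linear_combination h0
    -- coefficients are invariant under translation by g
    have hshift : ∀ x : ZMod p,
        (v : MonoidAlgebra R G).coeff (Multiplicative.ofAdd x)
          = (v : MonoidAlgebra R G).coeff (Multiplicative.ofAdd (x - g)) := by
      intro x
      conv_lhs => rw [heq]
      rw [hs, MonoidAlgebra.coeff_mul_single_apply, mul_one]
      congr 1
      simp [ofAdd_sub, div_eq_mul_inv]
    have hiter : ∀ (n : ℕ) (x : ZMod p),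
        (v : MonoidAlgebra R G).coeff (Multiplicative.ofAdd x)
          = (v : MonoidAlgebra R G).coeff (Multiplicative.ofAdd (x - n • g)) := by
      intro n
      induction n with
      | zero => intro x; simp
      | succ n ih =>
        intro x
        rw [hshift x, ih (x - g)]
        congr 2
        rw [succ_nsmul]
        ring
    have hconst : ∀ x : ZMod p,
        (v : MonoidAlgebra R G).coeff (Multiplicative.ofAdd x)
          = (v : MonoidAlgebra R G).coeff (Multiplicative.ofAdd (0 : ZMod p)) := by
      intro x
      have := hiter (x * g⁻¹).val x
      rw [this]
      congr 2
      have hval : ((x * g⁻¹).val : ZMod p) = x * g⁻¹ := by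
        simp [ZMod.natCast_val, ZMod.cast_id]
      rw [nsmul_eq_mul, hval]
      field_simp
      ring
    -- the common value
    set c : R := (v : MonoidAlgebra R G).coeff (Multiplicative.ofAdd (0 : ZMod p)) with hc
    have hall : ∀ y : G, (v : MonoidAlgebra R G).coeff y = c := by
      intro y
      have := hconst (Multiplicative.toAdd y)
      simpa using this
    have hsum : augmentation R G (v : MonoidAlgebra R G) = 0 := v.2
    rw [augmentation_apply', Finsupp.sum_fintype _ _ (fun _ => rfl)] at hsum
    have hcard : (Fintype.card G : R) * c = 0 := by
      rw [← hsum]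
      rw [Finset.sum_congr rfl (fun y _ => hall y)]
      simp [mul_comm]
    have hcardG : Fintype.card G = p := by
      simp [hG, ZMod.card]
    have hpne : (p : R) ≠ 0 := by
      intro h
      have hdvd : q ∣ p := (ZMod.natCast_eq_zero_iff p q).mp h
      exact hpq ((Nat.prime_dvd_prime_iff_eq hq hp).mp hdvd).symm
    rw [hcardG] at hcard
    have hc0 : c = 0 := by
      rcases mul_eq_zero.mp hcard with h | h
      · exact absurd h hpne
      · exact h
    apply Subtype.ext
    apply MonoidAlgebra.ext
    apply Finsupp.ext
    intro y
    simp [hall y, hc0]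
  haveI : FiniteDimensional R (MonoidAlgebra R G) :=
    Module.Finite.of_basis (MonoidAlgebra.basis G R : Module.Basis G R (MonoidAlgebra R G))
  haveI : FiniteDimensional R I :=
    FiniteDimensional.of_injective
      ({ toFun := Subtype.val, map_add' := fun _ _ => rfl, map_smul' := fun _ _ => rfl } :
        I →ₗ[R] MonoidAlgebra R G) Subtype.val_injective
  exact ⟨LinearEquiv.ofBijective f ⟨hinj, LinearMap.injective_iff_surjective.mp hinj⟩,
    fun v => rfl⟩
end
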